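/- Let μ ∈ P(ℝ^N) be absolutely continuous with respect to Lebesgue measure. Then μ admits a disintegration μ(dx) = μ₁(dx₁) μ^{x₁}(dx₂) ⋯ μ^{x_{1:N−1}}(dx_N) such that μ₁ and every conditional measure μ^{x_{1:t}} (for all t < N and all x_{1:t} ∈ ℝ^t) is an atomless probability measure on ℝ. -/

import Mathlib

open MeasureTheory ProbabilityTheory

variable {N : ℕ}

/-- The σ-algebra on the path space `∀ i, X i` generated by the first `t` coordinates. -/
def pathFiltration (X : Fin N → Type*) [∀ i, MeasurableSpace (X i)] (t : ℕ) :
    MeasurableSpace (∀ i, X i) :=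
  ⨆ i : Fin N, ⨆ _ : (i : ℕ) < t, MeasurableSpace.comap (fun x => x i) inferInstance

/-- A coupling `π` of laws of `N`-step processes is *causal* if it admits a
disintegration kernel `κ` over its first marginal such that for every `t < N` and every
set `B` depending only on the first `t` `Y`-coordinates, `x ↦ κ x B` is measurable with
respect to the first `t` `X`-coordinates. -/
def IsCausal {X Y : Fin N → Type*} [∀ i, MeasurableSpace (X i)] [∀ i, MeasurableSpace (Y i)]
    (π : Measure ((∀ i, X i) × (∀ i, Y i))) : Prop :=
  ∃ κ : Kernel (∀ i, X i) (∀ i, Y i), IsMarkovKernel κ ∧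
    π = (π.map Prod.fst).compProd κ ∧
    ∀ t : ℕ, t < N → ∀ B : Set (∀ i, Y i), MeasurableSet[pathFiltration Y t] B →
      Measurable[pathFiltration X t] (fun x => κ x B)

/-- A coupling is *bicausal* if both it and its coordinate swap are causal. -/
def IsBicausal {X Y : Fin N → Type*} [∀ i, MeasurableSpace (X i)] [∀ i, MeasurableSpace (Y i)]
    (π : Measure ((∀ i, X i) × (∀ i, Y i))) : Prop :=
  IsCausal π ∧ IsCausal (π.map Prod.swap)

/-- A map between path spaces is *adapted* if its `t`-th component depends only on the
first `t` coordinates. -/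
def IsAdapted {X Y : Fin N → Type*} (T : (∀ i, X i) → (∀ i, Y i)) : Prop :=
  ∀ (t : Fin N) (x x' : ∀ i, X i), (∀ s, s ≤ t → x s = x' s) → T x t = T x' t

/-- A map is *biadapted* if it is adapted and has a (two-sided) inverse which is also
adapted; in particular it is a bijection. -/
def IsBiadapted {X Y : Fin N → Type*} (T : (∀ i, X i) → (∀ i, Y i)) : Prop :=
  IsAdapted T ∧ ∃ S : (∀ i, Y i) → (∀ i, X i),
    Function.LeftInverse S T ∧ Function.RightInverse S T ∧ IsAdapted S

/-- Restriction of a path to its first `t` coordinates. -/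
def restrictPath {N : ℕ} {X : Fin N → Type*} (t : ℕ) (x : ∀ i, X i) :
    ∀ i : {i : Fin N // (i : ℕ) < t}, X i := fun i => x i

/-- `μ` admits successive disintegrations whose conditional laws (of each coordinate
given the strictly preceding ones) are all atomless probability measures —
Assumption 3.1 of the paper. -/
def HasAtomlessDisintegrations {N : ℕ} {X : Fin N → Type*} [∀ i, MeasurableSpace (X i)]
    (μ : Measure (∀ i, X i)) : Prop :=
  ∀ t : Fin N, ∃ κ : ProbabilityTheory.Kernel (∀ i : {i : Fin N // (i : ℕ) < (t : ℕ)}, X i) (X t),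
    ProbabilityTheory.IsMarkovKernel κ ∧
    μ.map (fun x => (restrictPath (t : ℕ) x, x t))
      = (μ.map (restrictPath (t : ℕ) (X := X))).compProd κ ∧
    ∀ h, ∀ a : X t, κ h {a} = 0

private lemma aux_pair_ac {N : ℕ} (μ : Measure (Fin N → ℝ)) (hac : μ ≪ volume) (t : Fin N) :
    μ.map (fun x => (restrictPath (t : ℕ) (X := fun _ : Fin N => ℝ) x, x t)) ≪
      (volume : Measure (∀ _ : {i : Fin N // (i : ℕ) < (t : ℕ)}, ℝ)).prod
        (volume : Measure ℝ) := by
  classical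
  let p : Fin N → Prop := fun i => (i : ℕ) < (t : ℕ)
  let e := MeasurableEquiv.piEquivPiSubtypeProd (fun _ : Fin N => ℝ) p
  have he : MeasurePreserving e volume volume :=
    volume_preserving_piEquivPiSubtypeProd (fun _ : Fin N => ℝ) p
  let tc : {i : Fin N // ¬ p i} := ⟨t, by simp [p]⟩
  let g : (∀ i : {i : Fin N // p i}, ℝ) × (∀ i : {i : Fin N // ¬ p i}, ℝ) →
      (∀ i : {i : Fin N // p i}, ℝ) × ℝ := fun q => (q.1, q.2 tc)
  have hg : Measurable g :=
    measurable_fst.prodMk ((measurable_pi_apply tc).comp measurable_snd)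
  have hcomp : (fun x : Fin N → ℝ =>
      (restrictPath (t : ℕ) (X := fun _ : Fin N => ℝ) x, x t)) = g ∘ e := rfl
  rw [hcomp, ← Measure.map_map hg e.measurable]
  have h1 : μ.map e ≪ (volume : Measure (∀ i : {i : Fin N // p i}, ℝ)).prod
      (volume : Measure (∀ i : {i : Fin N // ¬ p i}, ℝ)) := by
    have h2 := hac.map (f := e) e.measurable
    rwa [he.map_eq, Measure.volume_eq_prod] at h2
  refine (h1.map hg).trans ?_
  refine Measure.AbsolutelyContinuous.mk fun S hS hS0 => ?_
  rw [Measure.measure_prod_null hS] at hS0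
  rw [Measure.map_apply hg hS, Measure.prod_apply (hg hS),
    lintegral_eq_zero_iff (measurable_measure_prodMk_left (hg hS))]
  filter_upwards [hS0] with a ha
  simp only [Pi.zero_apply] at ha
  have hpre : (Prod.mk a ⁻¹' (g ⁻¹' S)) = (fun b => b tc) ⁻¹' (Prod.mk a ⁻¹' S) := rfl
  show (volume : Measure _) (Prod.mk a ⁻¹' (g ⁻¹' S)) = 0
  rw [hpre]
  show (Measure.pi fun _ : {i : Fin N // ¬ p i} => (volume : Measure ℝ))
    ((fun b => b tc) ⁻¹' (Prod.mk a ⁻¹' S)) = 0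
  exact Measure.pi_eval_preimage_null (μ := fun _ : {i : Fin N // ¬ p i} => (volume : Measure ℝ)) ha

/-- Every probability measure on `ℝ^N` that is absolutely continuous
with respect to Lebesgue measure admits a successive disintegration all of whose
conditional measures (of each coordinate given the preceding ones) are atomless
probability measures on `ℝ`. -/
theorem hasAtomlessDisintegrations_of_absolutelyContinuous
    {N : ℕ} (μ : Measure (Fin N → ℝ)) [IsProbabilityMeasure μ]
    (hac : μ ≪ (volume : Measure (Fin N → ℝ))) :
    HasAtomlessDisintegrations (X := fun _ : Fin N => ℝ) μ := by
    classical
  intro t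
  have hre : Measurable (restrictPath (t : ℕ) (X := fun _ : Fin N => ℝ)) :=
    measurable_pi_lambda _ fun i => measurable_pi_apply _
  have hpair : Measurable (fun x : Fin N → ℝ =>
      (restrictPath (t : ℕ) (X := fun _ : Fin N => ℝ) x, x t)) :=
    hre.prodMk (measurable_pi_apply t)
  set ρ : Measure ((∀ i : {i : Fin N // (i : ℕ) < (t : ℕ)}, ℝ) × ℝ) :=
    μ.map (fun x => (restrictPath (t : ℕ) x, x t)) with hρ
  haveI : IsProbabilityMeasure ρ := Measure.isProbabilityMeasure_map hpair.aemeasurable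
  set ν : Measure ℝ := gaussianReal 0 1 with hν
  have hν0 : ∀ a : ℝ, ν {a} = 0 := fun a =>
    (gaussianReal_absolutelyContinuous 0 one_ne_zero) (measure_singleton a)
  have hvolν : (volume : Measure ℝ) ≪ ν := gaussianReal_absolutelyContinuous' 0 one_ne_zero
  have hA : ρ ≪ (volume : Measure _).prod (volume : Measure ℝ) := aux_pair_ac μ hac t
  -- Step B : `ρ` is absolutely continuous w.r.t. `ρ.fst.prod ν`.
  have hB : ρ ≪ ρ.fst.prod ν := by
    refine Measure.AbsolutelyContinuous.mk fun S hS hS0 => ?_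
    rw [Measure.measure_prod_null hS] at hS0
    set A : Set (∀ i : {i : Fin N // (i : ℕ) < (t : ℕ)}, ℝ) :=
      {a | (volume : Measure ℝ) (Prod.mk a ⁻¹' S) = 0} with hAdef
    have hAm : MeasurableSet A :=
      measurable_measure_prodMk_left hS (measurableSet_singleton 0)
    have hAc : ρ.fst Aᶜ = 0 := by
      have hmem : ∀ᵐ a ∂ρ.fst, a ∈ A := by
        filter_upwards [hS0] with a ha
        simp only [Pi.zero_apply] at ha
        exact hvolν ha
      exact ae_iff.mp hmem
    have h1 : ρ (S ∩ A ×ˢ Set.univ) = 0 := by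
      refine hA ?_
      rw [Measure.measure_prod_null (hS.inter (hAm.prod MeasurableSet.univ))]
      refine Filter.Eventually.of_forall fun a => ?_
      by_cases haA : a ∈ A
      · exact measure_mono_null (fun b hb => hb.1) haA
      · have hempty : Prod.mk a ⁻¹' (S ∩ A ×ˢ Set.univ) = ∅ := by
          ext b; simp [haA]
        simp [hempty]
    have h2 : ρ (Aᶜ ×ˢ Set.univ) = 0 := by
      have hpre : Aᶜ ×ˢ (Set.univ : Set ℝ) = Prod.fst ⁻¹' Aᶜ := by ext p; simp
      rw [hpre, ← Measure.fst_apply hAm.compl]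
      exact hAc
    have hsub : S ⊆ (S ∩ A ×ˢ Set.univ) ∪ Aᶜ ×ˢ Set.univ := by
      intro q hq
      by_cases hqA : q.1 ∈ A
      · exact Or.inl ⟨hq, hqA, trivial⟩
      · exact Or.inr ⟨hqA, trivial⟩
    refine le_antisymm ?_ zero_le
    calc ρ S ≤ ρ ((S ∩ A ×ˢ Set.univ) ∪ Aᶜ ×ˢ Set.univ) := measure_mono hsub
      _ ≤ ρ (S ∩ A ×ˢ Set.univ) + ρ (Aᶜ ×ˢ Set.univ) := measure_union_le _ _
      _ = 0 := by rw [h1, h2, add_zero]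
  -- Step C : almost every conditional kernel is absolutely continuous w.r.t. `ν`.
  set κc := ρ.condKernel with hκc
  set η : Kernel (∀ i : {i : Fin N // (i : ℕ) < (t : ℕ)}, ℝ) ℝ := Kernel.const _ ν with hη
  have hM0 : ρ (Kernel.mutuallySingularSet κc η) = 0 := by
    refine hB ?_
    rw [Measure.measure_prod_null (Kernel.measurableSet_mutuallySingularSet κc η)]
    refine Filter.Eventually.of_forall fun a => ?_
    have hms := Kernel.measure_mutuallySingularSetSlice κc η a
    rwa [hη, Kernel.const_apply] at hms
  have hC : ∀ᵐ a ∂ρ.fst, κc a ≪ ν := by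
    have hcp : ρ.fst ⊗ₘ ρ.condKernel = ρ := Measure.disintegrate ρ ρ.condKernel
    rw [← hκc] at hcp
    rw [← hcp, Measure.compProd_apply (Kernel.measurableSet_mutuallySingularSet κc η),
      lintegral_eq_zero_iff (Kernel.measurable_kernel_prodMk_left
        (Kernel.measurableSet_mutuallySingularSet κc η))] at hM0
    filter_upwards [hM0] with a ha
    simp only [Pi.zero_apply] at ha
    have h0 : κc a (Kernel.mutuallySingularSetSlice κc η a) = 0 := ha
    have hsp : Kernel.singularPart κc η a = 0 := by
      rw [Kernel.singularPart_eq_zero_iff_apply_eq_zero]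
      set s := Kernel.mutuallySingularSetSlice κc η a with hs
      refine le_antisymm ?_ zero_le
      have hsum : κc a s
          = Kernel.withDensity η (Kernel.rnDeriv κc η) a s
            + Kernel.singularPart κc η a s := by
        conv_lhs => rw [← Kernel.rnDeriv_add_singularPart κc η]
        rw [Kernel.add_apply, Measure.add_apply]
      calc Kernel.singularPart κc η a s
          ≤ κc a s := by rw [hsum]; exact le_add_self
        _ = 0 := h0
    have hac' := (Kernel.singularPart_eq_zero_iff_absolutelyContinuous κc η a).mp hsp
    rwa [hη, Kernel.const_apply] at hac'
  -- Step D : modify the conditional kernel to be everywhere atomless.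
  have hSm : MeasurableSet {a | κc a ≪ η a} := Kernel.measurableSet_absolutelyContinuous κc η
  refine ⟨Kernel.piecewise hSm κc η, inferInstance, ?_, ?_⟩
  · have hfst : ρ.fst = μ.map (restrictPath (t : ℕ)) := by
      rw [hρ, Measure.fst, Measure.map_map measurable_fst hpair]
      rfl
    have hae : Kernel.piecewise hSm κc η =ᵐ[ρ.fst] κc := by
      filter_upwards [hC] with a ha
      rw [Kernel.piecewise_apply, if_pos]
      show κc a ≪ η a
      rwa [hη, Kernel.const_apply]
    rw [← hfst, Measure.compProd_congr hae, hκc, Measure.disintegrate ρ ρ.condKernel]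
  · intro h a
    rw [Kernel.piecewise_apply]
    split_ifs with hmem
    · refine hmem ?_
      rw [hη, Kernel.const_apply]
      exact hν0 a
    · rw [hη, Kernel.const_apply]
      exact hν0 a
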